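/- Let G be a finite simple graph with vertex set V, let a ≥ 1 be an integer and V_D' ⊆ V. Let S_1, …, S_k ⊆ V be pairwise disjoint vertex sets such that each induced subgraph G[S_i] is connected, and such that for each u ∈ V_D', either N^a(u) ⊆ S_i for some 1 ≤ i ≤ k, or N^a(u) ∩ (S_1 ∪ … ∪ S_k) = ∅. Define S := {v ∈ V : dist_G(v, S_1 ∪ … ∪ S_k) ≤ a}, and suppose G[S] is connected. Then (1) N_S = Σ_{i=1}^k N_{S_i}, and (2) D_S ≤ −1 + Σ_{i=1}^k (D_{S_i} + 2a + 1). -/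

import Mathlib

open Finset

/-- The subgraph of `G` induced by the vertex set `S`, viewed as a graph on all of `V`
(vertices outside `S` are isolated). Distances between vertices of `S` in this graph agree
with distances in the induced subgraph `G[S]`. -/
def SimpleGraph.restrictS {V : Type*} (G : SimpleGraph V) (S : Set V) : SimpleGraph V where
  Adj u v := u ∈ S ∧ v ∈ S ∧ G.Adj u v
  symm := ⟨fun _ _ ⟨hu, hv, h⟩ => ⟨hv, hu, h.symm⟩⟩
  loopless := ⟨fun _ ⟨_, _, h⟩ => G.ne_of_adj h rfl⟩

/-- `N_S`: the maximum size of a subset `T ⊆ S ∩ V_D'` whose elements are pairwise at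
`G`-distance greater than `2a`. -/
noncomputable def packing {V : Type*} [Fintype V] (G : SimpleGraph V) (VD : Set V)
    (a : ℕ) (S : Set V) : ℕ :=
  sSup {n | ∃ T : Finset V, ↑T ⊆ S ∩ VD ∧ T.card = n ∧
    ∀ u ∈ T, ∀ v ∈ T, u ≠ v → ((2 * a : ℕ) : ℕ∞) < G.edist u v}

/-- `D_S`: the diameter of the induced subgraph `G[S]`. -/
noncomputable def setDiam {V : Type*} (G : SimpleGraph V) (S : Set V) : ℕ∞ :=
  ⨆ u ∈ S, ⨆ v ∈ S, (G.restrictS S).edist u v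


section Aux
open SimpleGraph


/-- Along any walk, vertices at positions `s ≤ t` are at `G`-distance at most `t - s`. -/
lemma aux_edist_getVert {V : Type*} {G : SimpleGraph V} {u v : V} (p : G.Walk u v) :
    ∀ s t : ℕ, s ≤ t → G.edist (p.getVert s) (p.getVert t) ≤ ((t - s : ℕ) : ℕ∞) := by
  induction p with
  | nil =>
      intro s t _
      rw [SimpleGraph.Walk.getVert_of_length_le _ (by simp),
        SimpleGraph.Walk.getVert_of_length_le _ (by simp)]
      simp [SimpleGraph.edist_self]
  | @cons x b y h q ih =>
      intro s t hst
      cases s with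
      | zero =>
          cases t with
          | zero => simp [SimpleGraph.edist_self]
          | succ n =>
              rw [SimpleGraph.Walk.getVert_zero, SimpleGraph.Walk.getVert_cons_succ]
              calc G.edist x (q.getVert n)
                  ≤ G.edist x b + G.edist b (q.getVert n) := SimpleGraph.edist_triangle
                _ ≤ 1 + (n : ℕ∞) := by
                    refine add_le_add ?_ ?_
                    · exact le_of_eq (SimpleGraph.edist_eq_one_iff_adj.mpr h)
                    · simpa using ih 0 n (Nat.zero_le n)
                _ = ((n + 1 - 0 : ℕ) : ℕ∞) := by push_cast; ring
      | succ s' =>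
          cases t with
          | zero => omega
          | succ t' =>
              rw [SimpleGraph.Walk.getVert_cons_succ, SimpleGraph.Walk.getVert_cons_succ]
              simpa using ih s' t' (Nat.succ_le_succ_iff.mp hst)

/-- Midpoint lemma: if `edist u v ≤ 2a`, some vertex is within `a` of both. -/
lemma aux_midpoint {V : Type*} {G : SimpleGraph V} (a : ℕ) {u v : V}
    (h : G.edist u v ≤ ((2 * a : ℕ) : ℕ∞)) :
    ∃ m : V, G.edist u m ≤ (a : ℕ∞) ∧ G.edist m v ≤ (a : ℕ∞) := by
  have hne : G.edist u v ≠ ⊤ := ne_top_of_le_ne_top (by exact_mod_cast ENat.coe_ne_top (2*a)) h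
  obtain ⟨p, hp⟩ := SimpleGraph.exists_walk_of_edist_ne_top hne
  have hlen : p.length ≤ 2 * a := by
    have : (p.length : ℕ∞) ≤ ((2 * a : ℕ) : ℕ∞) := hp ▸ h
    exact_mod_cast this
  refine ⟨p.getVert a, ?_, ?_⟩
  · have := aux_edist_getVert p 0 a (Nat.zero_le a)
    simpa using this
  · by_cases hc : a ≤ p.length
    · have := aux_edist_getVert p a p.length hc
      rw [p.getVert_length] at this
      refine this.trans ?_
      have : p.length - a ≤ a := by omega
      exact_mod_cast this
    · rw [p.getVert_of_length_le (le_of_not_ge hc)]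
      simp [SimpleGraph.edist_self]

/-- Any finite pair at finite distance is at distance at most `card V`. -/
lemma aux_edist_le_card {V : Type*} [Fintype V] [DecidableEq V] {G : SimpleGraph V} {u v : V}
    (h : G.edist u v ≠ ⊤) : G.edist u v ≤ (Fintype.card V : ℕ∞) := by
  obtain ⟨p, hp⟩ := SimpleGraph.exists_walk_of_edist_ne_top h
  have h1 : G.edist u v ≤ (p.bypass.length : ℕ∞) := SimpleGraph.edist_le _
  have h2 : p.bypass.length < Fintype.card V := p.bypass_isPath.length_lt
  exact h1.trans (by exact_mod_cast h2.le)

lemma aux_restrictS_mono {V : Type*} {G : SimpleGraph V} {S T : Set V} (h : S ⊆ T) :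
    G.restrictS S ≤ G.restrictS T :=
  fun u v (hx : u ∈ S ∧ v ∈ S ∧ G.Adj u v) => (⟨h hx.1, h hx.2.1, hx.2.2⟩ : u ∈ T ∧ v ∈ T ∧ G.Adj u v)

/-- If `y ∈ W` and there is a `G`-walk from `x` to `y` of length at most `a`, then the same
walk lives in `G.restrictS S` where `S` is the `a`-neighborhood of `W`. -/
lemma aux_lift_walk {V : Type*} {G : SimpleGraph V} {a : ℕ} {W S : Set V}
    (hS : ∀ x : V, (∃ w ∈ W, G.edist x w ≤ (a : ℕ∞)) → x ∈ S) :
    ∀ {x y : V} (p : G.Walk x y), y ∈ W → p.length ≤ a →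
      (G.restrictS S).edist x y ≤ (p.length : ℕ∞) := by
  intro x y p
  induction p with
  | nil => intro _ _; simp [SimpleGraph.edist_self]
  | @cons x b y h q ih =>
      intro hy hlen
      rw [SimpleGraph.Walk.length_cons] at hlen ⊢
      have hq : q.length ≤ a := by omega
      have hxS : x ∈ S := hS x ⟨y, hy, le_trans (SimpleGraph.edist_le (SimpleGraph.Walk.cons h q))
        (by exact_mod_cast (by rw [SimpleGraph.Walk.length_cons]; exact hlen : (SimpleGraph.Walk.cons h q).length ≤ a))⟩
      have hbS : b ∈ S := hS b ⟨y, hy, le_trans (SimpleGraph.edist_le q) (by exact_mod_cast hq)⟩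
      have hadj : (G.restrictS S).Adj x b := (⟨hxS, hbS, h⟩ : x ∈ S ∧ b ∈ S ∧ G.Adj x b)
      calc (G.restrictS S).edist x y
          ≤ (G.restrictS S).edist x b + (G.restrictS S).edist b y := SimpleGraph.edist_triangle
        _ ≤ 1 + (q.length : ℕ∞) := add_le_add
            (le_of_eq (SimpleGraph.edist_eq_one_iff_adj.mpr hadj)) (ih hy hq)
        _ = ((q.length + 1 : ℕ) : ℕ∞) := by push_cast; ring

end Aux

lemma part1 {V : Type*} [Fintype V] (G : SimpleGraph V)
    (a : ℕ) (VD : Set V)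
    (k : ℕ) (Sf : Fin k → Set V)
    (hdisj : ∀ i j, i ≠ j → Disjoint (Sf i) (Sf j))
    (hVD : ∀ u ∈ VD,
      (∃ i, {x | G.edist u x ≤ (a : ℕ∞)} ⊆ Sf i) ∨
      ({x | G.edist u x ≤ (a : ℕ∞)} ∩ ⋃ i, Sf i) = ∅)
    (S : Set V) (hS : S = {v | ∃ w ∈ ⋃ i, Sf i, G.edist v w ≤ (a : ℕ∞)}) :
    packing G VD a S = ∑ i, packing G VD a (Sf i) := by
  classical
  -- basic facts about the packing sets
  set P : Set V → Set ℕ := fun X => {n | ∃ T : Finset V, ↑T ⊆ X ∩ VD ∧ T.card = n ∧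
    ∀ u ∈ T, ∀ v ∈ T, u ≠ v → ((2 * a : ℕ) : ℕ∞) < G.edist u v} with hP
  have hBdd : ∀ X, BddAbove (P X) := by
    intro X
    refine ⟨Fintype.card V, fun n hn => ?_⟩
    obtain ⟨T, _, hc, _⟩ := hn
    exact hc ▸ Finset.card_le_univ T
  have hNe : ∀ X, (P X).Nonempty := by
    intro X
    exact ⟨0, ∅, by simp, by simp, by simp⟩
  have hmem : ∀ X, packing G VD a X ∈ P X := by
    intro X
    exact Nat.sSup_mem (hNe X) (hBdd X)
  have hle : ∀ X n, n ∈ P X → n ≤ packing G VD a X := fun X n hn => le_csSup (hBdd X) hn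
  -- Sf i ⊆ S
  have hSfS : ∀ i, Sf i ⊆ S := by
    intro i v hv
    rw [hS]
    exact ⟨v, Set.mem_iUnion.mpr ⟨i, hv⟩, by simp [SimpleGraph.edist_self]⟩
  -- localization of hVD
  have hloc : ∀ u ∈ VD, ∀ i, u ∈ Sf i → {x | G.edist u x ≤ (a : ℕ∞)} ⊆ Sf i := by
    intro u hu i hui
    rcases hVD u hu with ⟨i', hi'⟩ | hempty
    · have : u ∈ Sf i' := hi' (by simp [SimpleGraph.edist_self])
      rcases eq_or_ne i' i with rfl | hne
      · exact hi'
      · exact absurd (Set.disjoint_left.mp (hdisj i' i hne) this) (fun h => h hui)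
    · exfalso
      have : u ∈ {x | G.edist u x ≤ (a : ℕ∞)} ∩ ⋃ i, Sf i :=
        ⟨by simp [SimpleGraph.edist_self], Set.mem_iUnion.mpr ⟨i, hui⟩⟩
      simp [hempty] at this
  have hcase : ∀ u ∈ VD, u ∈ S → ∃ i, u ∈ Sf i ∧ {x | G.edist u x ≤ (a : ℕ∞)} ⊆ Sf i := by
    intro u hu huS
    rw [hS] at huS
    obtain ⟨w, hw, hdw⟩ := huS
    rcases hVD u hu with ⟨i', hi'⟩ | hempty
    · exact ⟨i', hi' (by simp [SimpleGraph.edist_self]), hi'⟩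
    · exfalso
      have : w ∈ {x | G.edist u x ≤ (a : ℕ∞)} ∩ ⋃ i, Sf i := ⟨hdw, hw⟩
      simp [hempty] at this
  apply le_antisymm
  · -- packing S ≤ ∑ packing (Sf i)
    obtain ⟨T, hTsub, hTcard, hTfar⟩ := hmem S
    rw [← hTcard]
    have hsub : T ⊆ Finset.univ.biUnion (fun i => T.filter (· ∈ Sf i)) := by
      intro u hu
      obtain ⟨i, hui, _⟩ := hcase u (hTsub hu).2 (hTsub hu).1
      exact Finset.mem_biUnion.mpr ⟨i, Finset.mem_univ i, Finset.mem_filter.mpr ⟨hu, hui⟩⟩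
    calc T.card ≤ (Finset.univ.biUnion (fun i => T.filter (· ∈ Sf i))).card :=
            Finset.card_le_card hsub
      _ ≤ ∑ i, (T.filter (· ∈ Sf i)).card := Finset.card_biUnion_le
      _ ≤ ∑ i, packing G VD a (Sf i) := by
          refine Finset.sum_le_sum fun i _ => hle _ _ ?_
          refine ⟨T.filter (· ∈ Sf i), ?_, rfl, ?_⟩
          · intro u hu
            simp only [Finset.coe_filter, Set.mem_setOf_eq] at hu
            exact ⟨hu.2, (hTsub hu.1).2⟩
          · intro u hu v hv huv
            exact hTfar u (Finset.mem_of_mem_filter u hu) v (Finset.mem_of_mem_filter v hv) huv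
  · -- ∑ packing (Sf i) ≤ packing S
    choose T hTsub hTcard hTfar using fun i => hmem (Sf i)
    have hTdisj : ∀ i j : Fin k, i ≠ j → Disjoint (T i) (T j) := by
      intro i j hij
      refine Finset.disjoint_left.mpr fun u hui huj => ?_
      exact Set.disjoint_left.mp (hdisj i j hij) ((hTsub i hui).1) ((hTsub j huj).1)
    have hcard : (Finset.univ.biUnion T).card = ∑ i, packing G VD a (Sf i) := by
      rw [Finset.card_biUnion (fun i _ j _ hij => hTdisj i j hij)]
      exact Finset.sum_congr rfl fun i _ => hTcard i
    rw [← hcard]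
    refine hle _ _ ⟨Finset.univ.biUnion T, ?_, rfl, ?_⟩
    · intro u hu
      simp only [Finset.coe_biUnion, Set.mem_iUnion, Finset.mem_coe] at hu
      obtain ⟨i, _, hui⟩ := hu
      exact ⟨hSfS i (hTsub i hui).1, (hTsub i hui).2⟩
    · intro u hu v hv huv
      simp only [Finset.mem_biUnion] at hu hv
      obtain ⟨i, _, hui⟩ := hu
      obtain ⟨j, _, hvj⟩ := hv
      rcases eq_or_ne i j with rfl | hij
      · exact hTfar i u hui v hvj huv
      · by_contra hfar
        push_neg at hfar
        obtain ⟨m, hm1, hm2⟩ := aux_midpoint a hfar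
        have hmu : m ∈ Sf i := hloc u (hTsub i hui).2 i (hTsub i hui).1 hm1
        have hmv : m ∈ Sf j := hloc v (hTsub j hvj).2 j (hTsub j hvj).1
          (by rw [Set.mem_setOf_eq, SimpleGraph.edist_comm]; exact hm2)
        exact Set.disjoint_left.mp (hdisj i j hij) hmu hmv

lemma part2 {V : Type*} [Fintype V] (G : SimpleGraph V)
    (a : ℕ) (k : ℕ) (Sf : Fin k → Set V)
    (hconn : ∀ i, ∀ u ∈ Sf i, ∀ v ∈ Sf i, (G.restrictS (Sf i)).Reachable u v)
    (S : Set V) (hS : S = {v | ∃ w ∈ ⋃ i, Sf i, G.edist v w ≤ (a : ℕ∞)})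
    (hSne : S.Nonempty)
    (hSconn : ∀ u ∈ S, ∀ v ∈ S, (G.restrictS S).Reachable u v) :
    setDiam G S + 1 ≤ ∑ i, (setDiam G (Sf i) + ((2 * a + 1 : ℕ) : ℕ∞)) := by
  classical
  set H := G.restrictS S with hH
  have hSfS : ∀ i, Sf i ⊆ S := by
    intro i v hv
    rw [hS]
    exact ⟨v, Set.mem_iUnion.mpr ⟨i, hv⟩, by simp [SimpleGraph.edist_self]⟩
  have hSmem : ∀ x : V, (∃ w ∈ ⋃ i, Sf i, G.edist x w ≤ (a : ℕ∞)) → x ∈ S := by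
    intro x hx; rw [hS]; exact hx
  have hD_ne : ∀ i, setDiam G (Sf i) ≠ ⊤ := by
    intro i
    have hle : setDiam G (Sf i) ≤ (Fintype.card V : ℕ∞) := by
      refine iSup₂_le fun u hu => iSup₂_le fun v hv => ?_
      exact aux_edist_le_card (SimpleGraph.edist_ne_top_iff_reachable.mpr (hconn i u hu v hv))
    exact ne_top_of_le_ne_top (ENat.coe_ne_top _) hle
  set d : Fin k → ℕ := fun i => (setDiam G (Sf i)).toNat with hdd
  have hd : ∀ i, setDiam G (Sf i) = (d i : ℕ∞) := fun i => (ENat.coe_toNat (hD_ne i)).symm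
  -- the "ball around Sf i" has small H-diameter
  have hBdiam : ∀ (i : Fin k) (x y x' y' : V), x' ∈ Sf i → y' ∈ Sf i →
      G.edist x x' ≤ (a : ℕ∞) → G.edist y y' ≤ (a : ℕ∞) →
      H.edist x y ≤ ((d i + 2 * a : ℕ) : ℕ∞) := by
    intro i x y x' y' hx' hy' hxx' hyy'
    have hwalk : ∀ (z z' : V), z' ∈ Sf i → G.edist z z' ≤ (a : ℕ∞) → H.edist z z' ≤ (a : ℕ∞) := by
      intro z z' hz' hzz'
      have hne : G.edist z z' ≠ ⊤ := ne_top_of_le_ne_top (ENat.coe_ne_top a) hzz'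
      obtain ⟨p, hp⟩ := SimpleGraph.exists_walk_of_edist_ne_top hne
      have hlen : p.length ≤ a := by exact_mod_cast hp ▸ hzz'
      exact (aux_lift_walk hSmem p (Set.mem_iUnion.mpr ⟨i, hz'⟩) hlen).trans (by exact_mod_cast hlen)
    have h1 : H.edist x x' ≤ (a : ℕ∞) := hwalk x x' hx' hxx'
    have h3 : H.edist y' y ≤ (a : ℕ∞) := by
      rw [SimpleGraph.edist_comm]; exact hwalk y y' hy' hyy'
    have h2 : H.edist x' y' ≤ setDiam G (Sf i) := by
      refine le_trans (SimpleGraph.edist_anti (aux_restrictS_mono (hSfS i))) ?_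
      refine le_trans (le_iSup₂ (f := fun v (_ : v ∈ Sf i) =>
        (G.restrictS (Sf i)).edist x' v) y' hy') ?_
      exact le_iSup₂ (f := fun u (_ : u ∈ Sf i) =>
        ⨆ v ∈ Sf i, (G.restrictS (Sf i)).edist u v) x' hx'
    calc H.edist x y ≤ H.edist x x' + H.edist x' y := SimpleGraph.edist_triangle
      _ ≤ H.edist x x' + (H.edist x' y' + H.edist y' y) :=
          add_le_add_right SimpleGraph.edist_triangle _
      _ ≤ (a : ℕ∞) + ((d i : ℕ∞) + (a : ℕ∞)) :=
          add_le_add h1 (add_le_add (le_trans h2 (le_of_eq (hd i))) h3)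
      _ = ((d i + 2 * a : ℕ) : ℕ∞) := by push_cast; ring
  set C : ℕ := ∑ i, (d i + 2 * a + 1) with hC
  have key : ∀ u ∈ S, ∀ v ∈ S, H.edist u v ≤ ((C - 1 : ℕ) : ℕ∞) := by
    intro u hu v hv
    obtain ⟨p, hp⟩ := (hSconn u hu v hv).exists_walk_length_eq_edist
    set L := p.length with hL
    have hvertS : ∀ t, p.getVert t ∈ S := by
      intro t
      rcases Nat.lt_or_ge t L with ht | ht
      · exact (p.adj_getVert_succ ht : p.getVert t ∈ S ∧ p.getVert (t + 1) ∈ S ∧ G.Adj _ _).1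
      · rw [p.getVert_of_length_le ht]; exact hv
    set A : Fin k → Finset ℕ := fun i => (Finset.range (L + 1)).filter
      (fun t => ∃ w ∈ Sf i, G.edist (p.getVert t) w ≤ (a : ℕ∞)) with hA
    have hcover : Finset.range (L + 1) ⊆ Finset.univ.biUnion A := by
      intro t ht
      have := hvertS t
      rw [hS] at this
      obtain ⟨w, hw, hdw⟩ := this
      obtain ⟨i, hi⟩ := Set.mem_iUnion.mp hw
      exact Finset.mem_biUnion.mpr ⟨i, Finset.mem_univ i,
        Finset.mem_filter.mpr ⟨ht, w, hi, hdw⟩⟩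
    have hcardA : ∀ i, (A i).card ≤ d i + 2 * a + 1 := by
      intro i
      rcases (A i).eq_empty_or_nonempty with hAe | hAe
      · simp [hAe]
      · set m := (A i).min' hAe with hm
        set M := (A i).max' hAe with hM
        have hmM : m ≤ M := Finset.min'_le _ _ ((A i).max'_mem hAe)
        have hsub : A i ⊆ Finset.Icc m M := fun t ht =>
          Finset.mem_Icc.mpr ⟨Finset.min'_le _ t ht, Finset.le_max' _ t ht⟩
        have hcard : (A i).card ≤ M - m + 1 := by
          refine (Finset.card_le_card hsub).trans ?_
          rw [Nat.card_Icc]; omega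
        have hmmem : m ∈ Finset.filter
            (fun t => ∃ w ∈ Sf i, G.edist (p.getVert t) w ≤ (a : ℕ∞)) (Finset.range (L + 1)) :=
          (A i).min'_mem hAe
        have hMmem : M ∈ Finset.filter
            (fun t => ∃ w ∈ Sf i, G.edist (p.getVert t) w ≤ (a : ℕ∞)) (Finset.range (L + 1)) :=
          (A i).max'_mem hAe
        rw [Finset.mem_filter, Finset.mem_range] at hmmem hMmem
        obtain ⟨hmL, wm, hwm, hdwm⟩ := hmmem
        obtain ⟨hML, wM, hwM, hdwM⟩ := hMmem
        have hML' : M ≤ L := by omega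
        have hedge : H.edist (p.getVert m) (p.getVert M) ≤ ((d i + 2 * a : ℕ) : ℕ∞) :=
          hBdiam i _ _ wm wM hwm hwM hdwm hdwM
        have h1 : H.edist u (p.getVert m) ≤ (m : ℕ∞) := by
          have := aux_edist_getVert p 0 m (Nat.zero_le m)
          simpa using this
        have h2 : H.edist (p.getVert M) v ≤ ((L - M : ℕ) : ℕ∞) := by
          have := aux_edist_getVert p M L hML'
          rwa [p.getVert_length] at this
        have htri : (L : ℕ∞) ≤ (m : ℕ∞) + ((d i + 2 * a : ℕ) : ℕ∞) + ((L - M : ℕ) : ℕ∞) := by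
          calc (L : ℕ∞) = H.edist u v := hp
            _ ≤ H.edist u (p.getVert m) + H.edist (p.getVert m) v :=
                SimpleGraph.edist_triangle
            _ ≤ H.edist u (p.getVert m) +
                (H.edist (p.getVert m) (p.getVert M) + H.edist (p.getVert M) v) :=
                add_le_add_right SimpleGraph.edist_triangle _
            _ ≤ (m : ℕ∞) + (((d i + 2 * a : ℕ) : ℕ∞) + ((L - M : ℕ) : ℕ∞)) :=
                add_le_add h1 (add_le_add hedge h2)
            _ = (m : ℕ∞) + ((d i + 2 * a : ℕ) : ℕ∞) + ((L - M : ℕ) : ℕ∞) := by ring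
        have htriN : L ≤ m + (d i + 2 * a) + (L - M) := by exact_mod_cast htri
        omega
    have hLC : L + 1 ≤ C := by
      calc L + 1 = (Finset.range (L + 1)).card := by simp
        _ ≤ (Finset.univ.biUnion A).card := Finset.card_le_card hcover
        _ ≤ ∑ i, (A i).card := Finset.card_biUnion_le
        _ ≤ ∑ i, (d i + 2 * a + 1) := Finset.sum_le_sum fun i _ => hcardA i
    rw [← hp]
    exact_mod_cast (by omega : L ≤ C - 1)
  have hC1 : 1 ≤ C := by
    obtain ⟨v0, hv0⟩ := hSne
    rw [hS] at hv0
    obtain ⟨w, hw, _⟩ := hv0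
    obtain ⟨i0, _⟩ := Set.mem_iUnion.mp hw
    calc 1 ≤ d i0 + 2 * a + 1 := by omega
      _ ≤ C := Finset.single_le_sum (f := fun i => d i + 2 * a + 1) (fun i _ => Nat.zero_le _) (Finset.mem_univ i0)
  have hfin : setDiam G S ≤ ((C - 1 : ℕ) : ℕ∞) :=
    iSup₂_le fun u hu => iSup₂_le fun v hv => key u hu v hv
  calc setDiam G S + 1 ≤ ((C - 1 : ℕ) : ℕ∞) + 1 := add_le_add_left hfin 1
    _ = (C : ℕ∞) := by
        have hCC : C - 1 + 1 = C := by omega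
        conv_rhs => rw [← hCC]
        rw [Nat.cast_add, Nat.cast_one]
    _ = ∑ i, (setDiam G (Sf i) + ((2 * a + 1 : ℕ) : ℕ∞)) := by
        rw [hC, Nat.cast_sum]
        refine Finset.sum_congr rfl fun i _ => ?_
        rw [hd i]
        push_cast
        ring

/-- Lemma B.6. Let `a ≥ 1`, `V_D' ⊆ V`, and `S₁, …, S_k` pairwise disjoint
vertex sets, each inducing a connected subgraph, such that for each `u ∈ V_D'`, either
`N^a(u) ⊆ Sᵢ` for some `i`, or `N^a(u) ∩ (S₁ ∪ ⋯ ∪ S_k) = ∅`. Define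
`S := {v : dist_G(v, S₁ ∪ ⋯ ∪ S_k) ≤ a}` and suppose `G[S]` is connected. Then
(1) `N_S = ∑ᵢ N_{Sᵢ}` and (2) `D_S ≤ −1 + ∑ᵢ (D_{Sᵢ} + 2a + 1)`, i.e.
`D_S + 1 ≤ ∑ᵢ (D_{Sᵢ} + 2a + 1)`. -/
theorem merged_component_packing_and_diam
    {V : Type*} [Fintype V] (G : SimpleGraph V)
    (a : ℕ) (ha : 1 ≤ a) (VD : Set V)
    (k : ℕ) (Sf : Fin k → Set V)
    (hdisj : ∀ i j, i ≠ j → Disjoint (Sf i) (Sf j))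
    (hne : ∀ i, (Sf i).Nonempty)
    (hconn : ∀ i, ∀ u ∈ Sf i, ∀ v ∈ Sf i, (G.restrictS (Sf i)).Reachable u v)
    (hVD : ∀ u ∈ VD,
      (∃ i, {x | G.edist u x ≤ (a : ℕ∞)} ⊆ Sf i) ∨
      ({x | G.edist u x ≤ (a : ℕ∞)} ∩ ⋃ i, Sf i) = ∅)
    (S : Set V) (hS : S = {v | ∃ w ∈ ⋃ i, Sf i, G.edist v w ≤ (a : ℕ∞)})
    (hSne : S.Nonempty)
    (hSconn : ∀ u ∈ S, ∀ v ∈ S, (G.restrictS S).Reachable u v) :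
    packing G VD a S = ∑ i, packing G VD a (Sf i) ∧
    setDiam G S + 1 ≤ ∑ i, (setDiam G (Sf i) + ((2 * a + 1 : ℕ) : ℕ∞)) := by
  exact ⟨part1 G a VD k Sf hdisj hVD S hS,
    part2 G a k Sf hconn S hS hSne hSconn⟩
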